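/- In any optimal solution of the geographical load balancing linear program with strictly positive migration cost coefficients, all migration variables are zero. Formally: if b_{i,j} > 0 for all pairs (i,j), and z achieves the minimum of the objective sum over t,i of C_{i,t}(y_{i,t}) plus sum over t,i,j of b_{i,j} z_{i,j,t} subject to the feasibility constraints, then z_{i,j,d,t} = 0 for all i,j,d,t. -/

import Mathlib

open Finset

/-- Executed workload `y_{i,t}`: the assigned workload
`x_{i,t} = ∑_d x_{i,d,t-d}` plus net migrated-in workload (equation (1)). -/
noncomputable def execLoad (n D : ℕ) (x : Fin n → ℕ → ℤ → ℝ)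
    (z : Fin n → Fin n → ℕ → ℤ → ℝ) (i : Fin n) (t : ℤ) : ℝ :=
  (∑ d ∈ Finset.range (D + 1), x i d (t - d))
    + (∑ j : Fin n, ∑ d ∈ Finset.range (D + 1), z j i d (t - d))
    - (∑ j : Fin n, ∑ d ∈ Finset.range (D + 1), z i j d (t - d))

/-- Feasibility for the geographical load balancing LP (optimization (2)):
nonnegativity, the total assignment at each slot `1 ≤ t ≤ T` equals the
released workload `L_t`, migration is bounded by assignment (constraint
(2c)), and capacity `y_{i,t} ≤ M_i`. -/
def GLBFeasible (n T D : ℕ) (L : ℤ → ℝ) (M : Fin n → ℝ)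
    (x : Fin n → ℕ → ℤ → ℝ) (z : Fin n → Fin n → ℕ → ℤ → ℝ) : Prop :=
  (∀ i d t, 0 ≤ x i d t) ∧
  (∀ i j d t, 0 ≤ z i j d t) ∧
  (∀ t : ℤ, 1 ≤ t → t ≤ T →
    ∑ i : Fin n, ∑ d ∈ Finset.range (D + 1), x i d t = L t) ∧
  (∀ i : Fin n, ∀ d ∈ Finset.range (D + 1), ∀ t : ℤ,
    ∑ k ∈ Finset.range (D - d + 1), ∑ j : Fin n, z i j (d + k) (t - k)
      ≤ ∑ k ∈ Finset.range (D - d + 1), x i (d + k) (t - k)) ∧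
  (∀ i t, execLoad n D x z i t ≤ M i)

/-- Objective of the geographical load balancing LP: total energy cost plus
total migration cost over the horizon `1 ≤ t ≤ T`. -/
noncomputable def GLBObj (n T D : ℕ) (C : Fin n → ℤ → ℝ → ℝ)
    (b : Fin n → Fin n → ℝ) (x : Fin n → ℕ → ℤ → ℝ)
    (z : Fin n → Fin n → ℕ → ℤ → ℝ) : ℝ :=
  ∑ t ∈ Finset.Icc (1 : ℤ) T,
    ((∑ i : Fin n, C i t (execLoad n D x z i t))
      + ∑ i : Fin n, ∑ j : Fin n,
          b i j * ∑ d ∈ Finset.range (D + 1), z i j d t)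

noncomputable def gP (xx : ℕ → ℝ) (m : ℕ) : ℝ := ∑ k ∈ Finset.range m, xx k

noncomputable def gc (xx : ℕ → ℝ) (Z : ℝ) (k : ℕ) : ℝ :=
  min (xx k) (max (Z - gP xx k) 0)

lemma gc_nonneg (xx : ℕ → ℝ) (hx : ∀ k, 0 ≤ xx k) (Z : ℝ) (k : ℕ) : 0 ≤ gc xx Z k :=
  le_min (hx k) (le_max_right _ _)

lemma gc_le (xx : ℕ → ℝ) (Z : ℝ) (k : ℕ) : gc xx Z k ≤ xx k := min_le_left _ _

lemma gP_nonneg (xx : ℕ → ℝ) (hx : ∀ k, 0 ≤ xx k) (m : ℕ) : 0 ≤ gP xx m :=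
  Finset.sum_nonneg fun k _ => hx k

lemma gc_sum (xx : ℕ → ℝ) (hx : ∀ k, 0 ≤ xx k) (Z : ℝ) (hZ : 0 ≤ Z) (m : ℕ) :
    ∑ k ∈ Finset.range m, gc xx Z k = min (gP xx m) Z := by
  induction m with
  | zero => simp [gP, min_eq_left hZ]
  | succ m ih =>
    rw [Finset.sum_range_succ, ih]
    have hPm : gP xx (m+1) = gP xx m + xx m := by
      rw [gP, gP, Finset.sum_range_succ]
    rw [hPm, gc]
    rcases le_total Z (gP xx m) with h | h
    · rw [min_eq_right h, max_eq_right (by linarith), min_eq_right (hx m),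
        min_eq_right (by linarith [hx m])]
      ring
    · rw [min_eq_left h, max_eq_left (by linarith)]
      rcases le_total (xx m) (Z - gP xx m) with h2 | h2
      · rw [min_eq_left h2, min_eq_left (by linarith)]
      · rw [min_eq_right h2, min_eq_right (by linarith)]
        ring

/-- in any optimal solution of the geographical load balancing
LP with strictly positive migration cost coefficients `b_{i,j} > 0`, all
migration variables are zero (Lemma 1 of the paper). -/
theorem stmt_0 (n T D : ℕ) (L : ℤ → ℝ) (M : Fin n → ℝ)
    (C : Fin n → ℤ → ℝ → ℝ)
    (hC0 : ∀ i t y, 0 ≤ C i t y)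
    (hCconv : ∀ i t, ConvexOn ℝ Set.univ (C i t))
    (hCmono : ∀ i t, Monotone (C i t))
    (b : Fin n → Fin n → ℝ) (hb : ∀ i j, 0 < b i j)
    (x : Fin n → ℕ → ℤ → ℝ) (z : Fin n → Fin n → ℕ → ℤ → ℝ)
    (hfeas : GLBFeasible n T D L M x z)
    (hopt : ∀ x' z', GLBFeasible n T D L M x' z' →
      GLBObj n T D C b x z ≤ GLBObj n T D C b x' z') :
    ∀ (i j : Fin n) (d : ℕ), d ≤ D → ∀ t : ℤ, 1 ≤ t → t ≤ T →
      z i j d t = 0 := by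
  classical
  obtain ⟨hx0, hz0, hdem, hmig, hcap⟩ := hfeas
  intro i j d hdD t ht1 htT
  set Z := z i j d t with hZdef
  have hZ0 : 0 ≤ Z := hz0 i j d t
  set xk : ℕ → ℝ := fun k => x i (d + k) (t - (k : ℤ)) with hxkdef
  have hxk0 : ∀ k, 0 ≤ xk k := fun k => hx0 _ _ _
  set c : ℕ → ℝ := gc xk Z with hcdef
  have hc0 : ∀ k, 0 ≤ c k := gc_nonneg xk hxk0 Z
  have hcle : ∀ k, c k ≤ xk k := fun k => gc_le xk Z k
  have hcsum' : ∀ m, ∑ k ∈ Finset.range m, c k = min (gP xk m) Z :=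
    gc_sum xk hxk0 Z hZ0
  -- Z is at most the total assignment to i executing at time t + d
  have hZP : Z ≤ gP xk (D - d + 1) := by
    have h := hmig i d (Finset.mem_range.mpr (by omega)) t
    have h1 : Z ≤ ∑ k ∈ Finset.range (D - d + 1),
        ∑ j' : Fin n, z i j' (d + k) (t - (k : ℤ)) := by
      have h0 : Z ≤ ∑ j' : Fin n, z i j' (d + 0) (t - ((0 : ℕ) : ℤ)) := by
        have h2 := Finset.single_le_sum
          (f := fun j' : Fin n => z i j' (d + 0) (t - ((0 : ℕ) : ℤ)))
          (fun j' _ => hz0 _ _ _ _) (Finset.mem_univ j)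
        simpa using h2
      exact h0.trans (Finset.single_le_sum
        (f := fun k => ∑ j' : Fin n, z i j' (d + k) (t - (k : ℤ)))
        (fun k _ => Finset.sum_nonneg fun j' _ => hz0 _ _ _ _)
        (Finset.mem_range.mpr (by omega)))
    calc Z ≤ _ := h1
      _ ≤ _ := h
      _ = gP xk (D - d + 1) := by rw [gP]
  have hcsum : ∑ k ∈ Finset.range (D - d + 1), c k = Z := by
    rw [hcsum', min_eq_right hZP]
  -- g : reallocation amount as a function of the execution-slot index
  set g : ℕ → ℝ := fun u => if d ≤ u then c (u - d) else 0 with hgdef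
  have hg0 : ∀ u, 0 ≤ g u := by
    intro u; rw [hgdef]; dsimp only; split_ifs
    · exact hc0 _
    · exact le_refl 0
  have hginit : ∀ m, ∑ u ∈ Finset.range m, g u = min (gP xk (m - d)) Z := by
    intro m
    by_cases hm : d ≤ m
    · rw [Finset.range_eq_Ico, ← Finset.sum_Ico_consecutive _ (Nat.zero_le d) hm]
      have h1 : ∑ u ∈ Finset.Ico 0 d, g u = 0 := by
        apply Finset.sum_eq_zero
        intro u hu
        rw [hgdef]; dsimp only
        rw [if_neg (by simp at hu; omega)]
      have h2 : ∑ u ∈ Finset.Ico d m, g u = ∑ k ∈ Finset.range (m - d), c k := by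
        rw [Finset.sum_Ico_eq_sum_range]
        apply Finset.sum_congr rfl
        intro k _
        rw [hgdef]; dsimp only
        rw [if_pos (by omega)]
        congr 1
        omega
      rw [h1, h2, hcsum', zero_add]
    · have h1 : ∑ u ∈ Finset.range m, g u = 0 := by
        apply Finset.sum_eq_zero
        intro u hu
        rw [hgdef]; dsimp only
        rw [if_neg (by simp at hu; omega)]
      have h2 : m - d = 0 := by omega
      rw [h1, h2]
      rw [show gP xk 0 = 0 from by simp [gP], min_eq_left hZ0]
  have hgfull : ∑ u ∈ Finset.range (D + 1), g u = Z := by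
    rw [hginit, show D + 1 - d = D - d + 1 from by omega, min_eq_right hZP]
  -- the perturbation δ
  set δ : ℕ → ℤ → ℝ := fun d'' t'' =>
    if d ≤ d'' ∧ t'' = t - ((d'' - d : ℕ) : ℤ) then c (d'' - d) else 0 with hδdef
  have hδ0 : ∀ d'' t'', 0 ≤ δ d'' t'' := by
    intro d'' t''; rw [hδdef]; dsimp only; split_ifs
    · exact hc0 _
    · exact le_refl 0
  have hδx : ∀ d'' t'', δ d'' t'' ≤ x i d'' t'' := by
    intro d'' t''
    rw [hδdef]; dsimp only
    split_ifs with h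
    · obtain ⟨h1, h2⟩ := h
      have hx' : x i d'' t'' = xk (d'' - d) := by
        rw [hxkdef]; dsimp only
        rw [h2]
        congr 1
        omega
      rw [hx']
      exact hcle _
    · exact hx0 _ _ _
  have hδg : ∀ d'' : ℕ, δ d'' (t + (d : ℤ) - (d'' : ℤ)) = g d'' := by
    intro d''
    rw [hδdef, hgdef]; dsimp only
    by_cases h : d ≤ d''
    · rw [if_pos ⟨h, by omega⟩, if_pos h]
    · rw [if_neg (fun hc => h hc.1), if_neg h]
  have hδexec : ∀ t' : ℤ, ∑ d'' ∈ Finset.range (D + 1), δ d'' (t' - (d'' : ℤ))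
      = if t' = t + (d : ℤ) then Z else 0 := by
    intro t'
    by_cases h : t' = t + (d : ℤ)
    · rw [if_pos h]
      rw [← hgfull]
      apply Finset.sum_congr rfl
      intro d'' _
      rw [h]
      exact hδg d''
    · rw [if_neg h]
      apply Finset.sum_eq_zero
      intro d'' _
      rw [hδdef]; dsimp only
      rw [if_neg]
      rintro ⟨h1, h2⟩
      exact h (by omega)
  have hδwin0 : ∀ (d0 : ℕ) (t0 : ℤ), t0 + (d0 : ℤ) ≠ t + (d : ℤ) →
      ∑ k ∈ Finset.range (D - d0 + 1), δ (d0 + k) (t0 - (k : ℤ)) = 0 := by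
    intro d0 t0 h
    apply Finset.sum_eq_zero
    intro k _
    rw [hδdef]; dsimp only
    rw [if_neg]
    rintro ⟨h1, h2⟩
    exact h (by omega)
  have hδwin : ∀ (d0 : ℕ) (t0 : ℤ), d0 ≤ D → t0 + (d0 : ℤ) = t + (d : ℤ) →
      ∑ k ∈ Finset.range (D - d0 + 1), δ (d0 + k) (t0 - (k : ℤ))
        = Z - min (gP xk (d0 - d)) Z := by
    intro d0 t0 hd0 hTT
    have h1 : ∀ k, δ (d0 + k) (t0 - (k : ℤ)) = g (d0 + k) := by
      intro k
      have harg : t0 - (k : ℤ) = t + (d : ℤ) - ((d0 + k : ℕ) : ℤ) := by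
        push_cast; omega
      rw [harg]
      exact hδg (d0 + k)
    rw [Finset.sum_congr rfl (fun k _ => h1 k)]
    have h2 : ∑ k ∈ Finset.range (D - d0 + 1), g (d0 + k)
        = ∑ u ∈ Finset.Ico d0 (D + 1), g u := by
      rw [Finset.sum_Ico_eq_sum_range, show D + 1 - d0 = D - d0 + 1 from by omega]
    rw [h2, Finset.sum_Ico_eq_sub _ (by omega), hgfull, hginit]
  -- the modified solution
  set x' : Fin n → ℕ → ℤ → ℝ := fun i' d'' t'' =>
    x i' d'' t'' + (if i' = j then δ d'' t'' else 0)
      - (if i' = i then δ d'' t'' else 0) with hx'def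
  set z' : Fin n → Fin n → ℕ → ℤ → ℝ := fun i' j' d'' t'' =>
    z i' j' d'' t'' - (if i' = i then if j' = j then if d'' = d then
      if t'' = t then Z else 0 else 0 else 0 else 0) with hz'def
  have hx'pt : ∀ i' d'' t'', x' i' d'' t''
      = x i' d'' t'' + (if i' = j then δ d'' t'' else 0)
        - (if i' = i then δ d'' t'' else 0) := fun _ _ _ => rfl
  have hz'pt : ∀ i' j' d'' t'', z' i' j' d'' t''
      = z i' j' d'' t'' - (if i' = i then if j' = j then if d'' = d then
        if t'' = t then Z else 0 else 0 else 0 else 0) := fun _ _ _ _ => rfl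
  have hite_sum : ∀ (P : Prop) (_ : Decidable P) (s : Finset ℕ) (f : ℕ → ℝ),
      ∑ k ∈ s, (if P then f k else 0) = if P then ∑ k ∈ s, f k else 0 := by
    intro P hP s f
    split_ifs <;> simp
  -- generic sum decomposition for x'
  have hx'sum : ∀ (i' : Fin n) (s : Finset ℕ) (fd : ℕ → ℕ) (f : ℕ → ℤ),
      ∑ k ∈ s, x' i' (fd k) (f k)
        = (∑ k ∈ s, x i' (fd k) (f k))
          + (if i' = j then ∑ k ∈ s, δ (fd k) (f k) else 0)
          - (if i' = i then ∑ k ∈ s, δ (fd k) (f k) else 0) := by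
    intro i' s fd f
    rw [Finset.sum_congr rfl (fun k _ => hx'pt i' (fd k) (f k)),
      Finset.sum_sub_distrib, Finset.sum_add_distrib,
      hite_sum (i' = j) _ s (fun k => δ (fd k) (f k)),
      hite_sum (i' = i) _ s (fun k => δ (fd k) (f k))]
  -- executed loads are unchanged
  have hexeceq : ∀ (i' : Fin n) (t' : ℤ),
      execLoad n D x' z' i' t' = execLoad n D x z i' t' := by
    intro i' t'
    rw [execLoad, execLoad]
    have hterm1 : ∑ d'' ∈ Finset.range (D + 1), x' i' d'' (t' - (d'' : ℤ))
        = (∑ d'' ∈ Finset.range (D + 1), x i' d'' (t' - (d'' : ℤ)))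
          + (if i' = j then (if t' = t + (d : ℤ) then Z else 0) else 0)
          - (if i' = i then (if t' = t + (d : ℤ) then Z else 0) else 0) := by
      rw [hx'sum i' (Finset.range (D + 1)) (fun d'' => d'') (fun d'' => t' - (d'' : ℤ)),
        hδexec]
    have hin : ∑ j'' : Fin n, ∑ d'' ∈ Finset.range (D + 1), z' j'' i' d'' (t' - (d'' : ℤ))
        = (∑ j'' : Fin n, ∑ d'' ∈ Finset.range (D + 1), z j'' i' d'' (t' - (d'' : ℤ)))
          - (if i' = j then (if t' = t + (d : ℤ) then Z else 0) else 0) := by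
      rw [Finset.sum_congr rfl (fun j'' _ => Finset.sum_congr rfl
        (fun d'' _ => hz'pt j'' i' d'' (t' - (d'' : ℤ)))),
        Finset.sum_congr rfl (fun j'' _ => Finset.sum_sub_distrib _ _),
        Finset.sum_sub_distrib]
      congr 1
      by_cases hi'j : i' = j
      · have h1 : ∀ j'' : Fin n,
            ∑ d'' ∈ Finset.range (D + 1), (if j'' = i then if i' = j then
              if d'' = d then if t' - (d'' : ℤ) = t then Z else 0 else 0 else 0 else 0)
            = (if j'' = i then (if t' - (d : ℤ) = t then Z else 0) else 0) := by
          intro j''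
          by_cases h : j'' = i
          · rw [if_pos h]
            have hc2 : ∀ d'' : ℕ, (if j'' = i then if i' = j then
                if d'' = d then if t' - (d'' : ℤ) = t then Z else 0 else 0 else 0 else 0)
                = (if d'' = d then (if t' - (d'' : ℤ) = t then Z else 0) else 0) := by
              intro d''; rw [if_pos h, if_pos hi'j]
            rw [Finset.sum_congr rfl (fun d'' _ => hc2 d''),
              Finset.sum_ite_eq' (Finset.range (D + 1)) d
                (fun d'' => if t' - (d'' : ℤ) = t then Z else 0),
              if_pos (Finset.mem_range.mpr (by omega))]
          · rw [if_neg h]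
            exact Finset.sum_eq_zero fun d'' _ => if_neg h
        rw [Finset.sum_congr rfl (fun j'' _ => h1 j''),
          Finset.sum_ite_eq' Finset.univ i
            (fun _ => if t' - (d : ℤ) = t then Z else 0),
          if_pos (Finset.mem_univ i), if_pos hi'j]
        split_ifs with ha hb2 <;> first | rfl | (exfalso; omega)
      · rw [if_neg hi'j]
        apply Finset.sum_eq_zero
        intro j'' _
        apply Finset.sum_eq_zero
        intro d'' _
        by_cases h : j'' = i
        · rw [if_pos h, if_neg hi'j]
        · rw [if_neg h]
    have hout : ∑ j'' : Fin n, ∑ d'' ∈ Finset.range (D + 1), z' i' j'' d'' (t' - (d'' : ℤ))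
        = (∑ j'' : Fin n, ∑ d'' ∈ Finset.range (D + 1), z i' j'' d'' (t' - (d'' : ℤ)))
          - (if i' = i then (if t' = t + (d : ℤ) then Z else 0) else 0) := by
      rw [Finset.sum_congr rfl (fun j'' _ => Finset.sum_congr rfl
        (fun d'' _ => hz'pt i' j'' d'' (t' - (d'' : ℤ)))),
        Finset.sum_congr rfl (fun j'' _ => Finset.sum_sub_distrib _ _),
        Finset.sum_sub_distrib]
      congr 1
      by_cases hi'i : i' = i
      · have h1 : ∀ j'' : Fin n,
            ∑ d'' ∈ Finset.range (D + 1), (if i' = i then if j'' = j then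
              if d'' = d then if t' - (d'' : ℤ) = t then Z else 0 else 0 else 0 else 0)
            = (if j'' = j then (if t' - (d : ℤ) = t then Z else 0) else 0) := by
          intro j''
          by_cases h : j'' = j
          · rw [if_pos h]
            have hc2 : ∀ d'' : ℕ, (if i' = i then if j'' = j then
                if d'' = d then if t' - (d'' : ℤ) = t then Z else 0 else 0 else 0 else 0)
                = (if d'' = d then (if t' - (d'' : ℤ) = t then Z else 0) else 0) := by
              intro d''; rw [if_pos hi'i, if_pos h]
            rw [Finset.sum_congr rfl (fun d'' _ => hc2 d''),
              Finset.sum_ite_eq' (Finset.range (D + 1)) d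
                (fun d'' => if t' - (d'' : ℤ) = t then Z else 0),
              if_pos (Finset.mem_range.mpr (by omega))]
          · rw [if_neg h]
            apply Finset.sum_eq_zero
            intro d'' _
            rw [if_pos hi'i, if_neg h]
        rw [Finset.sum_congr rfl (fun j'' _ => h1 j''),
          Finset.sum_ite_eq' Finset.univ j
            (fun _ => if t' - (d : ℤ) = t then Z else 0),
          if_pos (Finset.mem_univ j), if_pos hi'i]
        split_ifs with ha hb2 <;> first | rfl | (exfalso; omega)
      · rw [if_neg hi'i]
        apply Finset.sum_eq_zero
        intro j'' _
        apply Finset.sum_eq_zero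
        intro d'' _
        rw [if_neg hi'i]
    rw [hterm1, hin, hout]
    ring
  -- feasibility of the modified solution
  have hfeas' : GLBFeasible n T D L M x' z' := by
    refine ⟨?_, ?_, ?_, ?_, ?_⟩
    · -- x' nonneg
      intro i' d'' t''
      rw [hx'pt]
      by_cases h1 : i' = i
      · by_cases h2 : i' = j
        · rw [if_pos h1, if_pos h2]
          linarith [hx0 i' d'' t'']
        · rw [if_pos h1, if_neg h2, h1]
          linarith [hδx d'' t'']
      · by_cases h2 : i' = j
        · rw [if_neg h1, if_pos h2]
          linarith [hx0 i' d'' t'', hδ0 d'' t'']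
        · rw [if_neg h1, if_neg h2]
          linarith [hx0 i' d'' t'']
    · -- z' nonneg
      intro i' j' d'' t''
      rw [hz'pt]
      by_cases h1 : i' = i
      · by_cases h2 : j' = j
        · by_cases h3 : d'' = d
          · by_cases h4 : t'' = t
            · rw [if_pos h1, if_pos h2, if_pos h3, if_pos h4, h1, h2, h3, h4, ← hZdef]
              simp
            · rw [if_pos h1, if_pos h2, if_pos h3, if_neg h4]
              simpa using hz0 i' j' d'' t''
          · rw [if_pos h1, if_pos h2, if_neg h3]
            simpa using hz0 i' j' d'' t''
        · rw [if_pos h1, if_neg h2]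
          simpa using hz0 i' j' d'' t''
      · rw [if_neg h1]
        simpa using hz0 i' j' d'' t''
    · -- demand
      intro t0 h1 h2
      rw [Finset.sum_congr rfl (fun i' (_ : i' ∈ Finset.univ) =>
        hx'sum i' (Finset.range (D + 1)) (fun d'' => d'') (fun _ => t0)),
        Finset.sum_sub_distrib, Finset.sum_add_distrib,
        Finset.sum_ite_eq' Finset.univ j
          (fun _ => ∑ d'' ∈ Finset.range (D + 1), δ d'' t0),
        Finset.sum_ite_eq' Finset.univ i
          (fun _ => ∑ d'' ∈ Finset.range (D + 1), δ d'' t0),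
        if_pos (Finset.mem_univ j), if_pos (Finset.mem_univ i)]
      have := hdem t0 h1 h2
      linarith
    · -- migration constraint
      intro i0 d0 hd0 t0
      have hd0D : d0 ≤ D := by
        have := Finset.mem_range.mp hd0; omega
      set IND := ∑ k ∈ Finset.range (D - d0 + 1),
        (if i0 = i then if d0 + k = d then if t0 - (k : ℤ) = t then Z else 0
          else 0 else 0) with hINDdef
      have hLHS : ∑ k ∈ Finset.range (D - d0 + 1), ∑ j' : Fin n, z' i0 j' (d0 + k) (t0 - (k : ℤ))
          = (∑ k ∈ Finset.range (D - d0 + 1), ∑ j' : Fin n, z i0 j' (d0 + k) (t0 - (k : ℤ)))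
            - IND := by
        rw [Finset.sum_congr rfl (fun k _ => Finset.sum_congr rfl
          (fun j' _ => hz'pt i0 j' (d0 + k) (t0 - (k : ℤ)))),
          Finset.sum_congr rfl (fun k _ => Finset.sum_sub_distrib _ _),
          Finset.sum_sub_distrib, hINDdef]
        congr 1
        apply Finset.sum_congr rfl
        intro k _
        by_cases hii : i0 = i
        · have hc2 : ∀ j' : Fin n, (if i0 = i then if j' = j then if d0 + k = d then
              if t0 - (k : ℤ) = t then Z else 0 else 0 else 0 else 0)
              = (if j' = j then (if d0 + k = d then if t0 - (k : ℤ) = t then Z else 0 else 0)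
                else 0) := by
            intro j'
            by_cases h : j' = j
            · rw [if_pos hii, if_pos h]
            · rw [if_pos hii, if_neg h]
          rw [Finset.sum_congr rfl (fun j' _ => hc2 j'),
            Finset.sum_ite_eq' Finset.univ j
              (fun _ => if d0 + k = d then if t0 - (k : ℤ) = t then Z else 0 else 0),
            if_pos (Finset.mem_univ j), if_pos hii]
        · rw [if_neg hii]
          exact Finset.sum_eq_zero fun j' _ => if_neg hii
      have hIND0 : 0 ≤ IND := by
        rw [hINDdef]
        apply Finset.sum_nonneg
        intro k _
        split_ifs <;> first | exact hZ0 | exact le_refl 0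
      have hRHS : ∑ k ∈ Finset.range (D - d0 + 1), x' i0 (d0 + k) (t0 - (k : ℤ))
          = (∑ k ∈ Finset.range (D - d0 + 1), x i0 (d0 + k) (t0 - (k : ℤ)))
            + (if i0 = j then ∑ k ∈ Finset.range (D - d0 + 1), δ (d0 + k) (t0 - (k : ℤ)) else 0)
            - (if i0 = i then ∑ k ∈ Finset.range (D - d0 + 1), δ (d0 + k) (t0 - (k : ℤ)) else 0) :=
        hx'sum i0 (Finset.range (D - d0 + 1)) (fun k => d0 + k) (fun k => t0 - (k : ℤ))
      have hW0 : 0 ≤ ∑ k ∈ Finset.range (D - d0 + 1), δ (d0 + k) (t0 - (k : ℤ)) :=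
        Finset.sum_nonneg fun k _ => hδ0 _ _
      have horig := hmig i0 d0 hd0 t0
      rw [hLHS, hRHS]
      by_cases hii : i0 = i
      · by_cases hij : i0 = j
        · rw [if_pos hij, if_pos hii]
          linarith
        · rw [if_neg hij, if_pos hii]
          by_cases hTT : t0 + (d0 : ℤ) = t + (d : ℤ)
          · by_cases hdd : d0 ≤ d
            · have hWZ : ∑ k ∈ Finset.range (D - d0 + 1), δ (d0 + k) (t0 - (k : ℤ)) = Z := by
                rw [hδwin d0 t0 hd0D hTT, show d0 - d = 0 from by omega,
                  show gP xk 0 = 0 from by simp [gP], min_eq_left hZ0]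
                ring
              have hINDZ : Z ≤ IND := by
                rw [hINDdef]
                have hmem : d - d0 ∈ Finset.range (D - d0 + 1) :=
                  Finset.mem_range.mpr (by omega)
                have hval : (if i0 = i then if d0 + (d - d0) = d then
                    if t0 - ((d - d0 : ℕ) : ℤ) = t then Z else 0 else 0 else 0) = Z := by
                  rw [if_pos hii, if_pos (show d0 + (d - d0) = d by omega),
                    if_pos (show t0 - ((d - d0 : ℕ) : ℤ) = t by omega)]
                calc Z = _ := hval.symm
                  _ ≤ _ := Finset.single_le_sum
                    (f := fun k => if i0 = i then if d0 + k = d then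
                      if t0 - (k : ℤ) = t then Z else 0 else 0 else 0)
                    (fun k _ => by split_ifs <;> first | exact hZ0 | exact le_refl (0:ℝ)) hmem
              rw [hWZ]
              linarith
            · -- d < d0
              have hINDzero : IND = 0 := by
                rw [hINDdef]
                apply Finset.sum_eq_zero
                intro k _
                rw [if_pos hii, if_neg (show ¬ d0 + k = d by omega)]
              have hWval : ∑ k ∈ Finset.range (D - d0 + 1), δ (d0 + k) (t0 - (k : ℤ))
                  = Z - min (gP xk (d0 - d)) Z := hδwin d0 t0 hd0D hTT
              have hR : ∑ k ∈ Finset.range (D - d0 + 1), x i0 (d0 + k) (t0 - (k : ℤ))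
                  = gP xk (D - d + 1) - gP xk (d0 - d) := by
                have e1 : ∀ k, x i0 (d0 + k) (t0 - (k : ℤ)) = xk ((d0 - d) + k) := by
                  intro k
                  rw [hii, hxkdef]; dsimp only
                  congr 1
                  · omega
                  · omega
                rw [Finset.sum_congr rfl (fun k _ => e1 k)]
                have e2 : ∑ u ∈ Finset.Ico (d0 - d) (D - d + 1), xk u
                    = ∑ k ∈ Finset.range (D - d0 + 1), xk ((d0 - d) + k) := by
                  rw [Finset.sum_Ico_eq_sum_range,
                    show D - d + 1 - (d0 - d) = D - d0 + 1 from by omega]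
                rw [← e2, Finset.sum_Ico_eq_sub _ (show d0 - d ≤ D - d + 1 by omega)]
                rw [gP, gP]
              have hLa : (∑ k ∈ Finset.range (D - d0 + 1),
                  ∑ j' : Fin n, z i0 j' (d0 + k) (t0 - (k : ℤ))) + Z
                    ≤ gP xk (D - d + 1) := by
                have hfull : ∑ u ∈ Finset.range (D - d + 1),
                    (∑ j' : Fin n, z i j' (d + u) (t - (u : ℤ))) ≤ gP xk (D - d + 1) := by
                  have h := hmig i d (Finset.mem_range.mpr (by omega)) t
                  calc _ ≤ _ := h
                    _ = gP xk (D - d + 1) := by rw [gP]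
                have hreidx : (∑ k ∈ Finset.range (D - d0 + 1),
                    ∑ j' : Fin n, z i0 j' (d0 + k) (t0 - (k : ℤ)))
                    = ∑ u ∈ Finset.Ico (d0 - d) (D - d + 1),
                        (∑ j' : Fin n, z i j' (d + u) (t - (u : ℤ))) := by
                  rw [Finset.sum_Ico_eq_sum_range,
                    show D - d + 1 - (d0 - d) = D - d0 + 1 from by omega]
                  apply Finset.sum_congr rfl
                  intro k _
                  rw [hii]
                  apply Finset.sum_congr rfl
                  intro j' _
                  congr 1
                  · omega
                  · omega
                have hsplit : (∑ u ∈ Finset.Ico (d0 - d) (D - d + 1),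
                    (∑ j' : Fin n, z i j' (d + u) (t - (u : ℤ))))
                    = (∑ u ∈ Finset.range (D - d + 1),
                        (∑ j' : Fin n, z i j' (d + u) (t - (u : ℤ))))
                      - (∑ u ∈ Finset.range (d0 - d),
                          (∑ j' : Fin n, z i j' (d + u) (t - (u : ℤ)))) :=
                  Finset.sum_Ico_eq_sub _ (by omega)
                have hZle2 : Z ≤ ∑ u ∈ Finset.range (d0 - d),
                    (∑ j' : Fin n, z i j' (d + u) (t - (u : ℤ))) := by
                  have h0 : Z ≤ ∑ j' : Fin n, z i j' (d + 0) (t - ((0 : ℕ) : ℤ)) := by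
                    have h2 := Finset.single_le_sum
                      (f := fun j' : Fin n => z i j' (d + 0) (t - ((0 : ℕ) : ℤ)))
                      (fun j' _ => hz0 _ _ _ _) (Finset.mem_univ j)
                    simpa using h2
                  exact h0.trans (Finset.single_le_sum
                    (f := fun u => ∑ j' : Fin n, z i j' (d + u) (t - (u : ℤ)))
                    (fun u _ => Finset.sum_nonneg fun j' _ => hz0 _ _ _ _)
                    (Finset.mem_range.mpr (by omega)))
                rw [hreidx, hsplit]
                linarith
              rw [hINDzero, hWval, hR]
              rcases le_total (gP xk (d0 - d)) Z with h | h
              · rw [min_eq_left h]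
                linarith
              · rw [min_eq_right h]
                linarith
          · rw [hδwin0 d0 t0 hTT]
            linarith
      · rw [if_neg hii]
        have hINDzero : IND = 0 := by
          rw [hINDdef]
          apply Finset.sum_eq_zero
          intro k _
          rw [if_neg hii]
        rw [hINDzero]
        by_cases hij : i0 = j
        · rw [if_pos hij]
          linarith
        · rw [if_neg hij]
          linarith
    · -- capacity
      intro i' t'
      rw [hexeceq i' t']
      exact hcap i' t'
  -- objective comparison
  have hobj : GLBObj n T D C b x' z' = GLBObj n T D C b x z - b i j * Z := by
    rw [GLBObj, GLBObj]
    have hmigsum : ∀ t'' : ℤ,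
        (∑ i' : Fin n, ∑ j' : Fin n,
          b i' j' * ∑ d'' ∈ Finset.range (D + 1), z' i' j' d'' t'')
        = (∑ i' : Fin n, ∑ j' : Fin n,
            b i' j' * ∑ d'' ∈ Finset.range (D + 1), z i' j' d'' t'')
          - (if t'' = t then b i j * Z else 0) := by
      intro t''
      have hinner : ∀ i' j' : Fin n, ∑ d'' ∈ Finset.range (D + 1), z' i' j' d'' t''
          = (∑ d'' ∈ Finset.range (D + 1), z i' j' d'' t'')
            - (if i' = i then if j' = j then if t'' = t then Z else 0 else 0 else 0) := by
        intro i' j'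
        rw [Finset.sum_congr rfl (fun d'' _ => hz'pt i' j' d'' t''),
          Finset.sum_sub_distrib]
        congr 1
        by_cases h1 : i' = i
        · by_cases h2 : j' = j
          · have hc2 : ∀ d'' : ℕ, (if i' = i then if j' = j then if d'' = d then
                if t'' = t then Z else 0 else 0 else 0 else 0)
                = (if d'' = d then (if t'' = t then Z else 0) else 0) := by
              intro d''; rw [if_pos h1, if_pos h2]
            rw [Finset.sum_congr rfl (fun d'' _ => hc2 d''),
              Finset.sum_ite_eq' (Finset.range (D + 1)) d
                (fun _ => if t'' = t then Z else 0),
              if_pos (Finset.mem_range.mpr (by omega)), if_pos h1, if_pos h2]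
          · rw [if_pos h1, if_neg h2]
            apply Finset.sum_eq_zero
            intro d'' _
            rw [if_pos h1, if_neg h2]
        · rw [if_neg h1]
          exact Finset.sum_eq_zero fun d'' _ => if_neg h1
      rw [Finset.sum_congr rfl (fun i' (_ : i' ∈ Finset.univ) =>
        Finset.sum_congr rfl (fun j' (_ : j' ∈ Finset.univ) => by
          rw [hinner i' j', mul_sub])),
        Finset.sum_congr rfl (fun i' (_ : i' ∈ Finset.univ) => Finset.sum_sub_distrib _ _),
        Finset.sum_sub_distrib]
      congr 1
      have houter : ∀ i' : Fin n, (∑ j' : Fin n, b i' j' *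
          (if i' = i then if j' = j then (if t'' = t then Z else 0) else 0 else 0))
          = (if i' = i then b i' j * (if t'' = t then Z else 0) else 0) := by
        intro i'
        by_cases h1 : i' = i
        · rw [if_pos h1]
          have h3 : ∀ j' : Fin n, b i' j' *
              (if i' = i then if j' = j then (if t'' = t then Z else 0) else 0 else 0)
              = (if j' = j then b i' j' * (if t'' = t then Z else 0) else 0) := by
            intro j'
            rw [if_pos h1]
            split_ifs <;> ring
          rw [Finset.sum_congr rfl (fun j' _ => h3 j'),
            Finset.sum_ite_eq' Finset.univ j
              (fun j' => b i' j' * (if t'' = t then Z else 0)),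
            if_pos (Finset.mem_univ j)]
        · rw [if_neg h1]
          apply Finset.sum_eq_zero
          intro j' _
          rw [if_neg h1, mul_zero]
      rw [Finset.sum_congr rfl (fun i' _ => houter i'),
        Finset.sum_ite_eq' Finset.univ i
          (fun i' => b i' j * (if t'' = t then Z else 0)),
        if_pos (Finset.mem_univ i)]
      split_ifs <;> ring
    have hterm : ∀ t'' : ℤ,
        ((∑ i' : Fin n, C i' t'' (execLoad n D x' z' i' t''))
          + ∑ i' : Fin n, ∑ j' : Fin n,
              b i' j' * ∑ d'' ∈ Finset.range (D + 1), z' i' j' d'' t'')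
        = ((∑ i' : Fin n, C i' t'' (execLoad n D x z i' t''))
            + ∑ i' : Fin n, ∑ j' : Fin n,
                b i' j' * ∑ d'' ∈ Finset.range (D + 1), z i' j' d'' t'')
          - (if t'' = t then b i j * Z else 0) := by
      intro t''
      rw [hmigsum t'',
        Finset.sum_congr rfl (fun i' (_ : i' ∈ Finset.univ) => by rw [hexeceq i' t''])]
      ring
    rw [Finset.sum_congr rfl (fun t'' _ => hterm t''), Finset.sum_sub_distrib,
      Finset.sum_ite_eq' (Finset.Icc (1 : ℤ) T) t (fun _ => b i j * Z),
      if_pos (Finset.mem_Icc.mpr ⟨ht1, htT⟩)]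
  have hle := hopt x' z' hfeas'
  rw [hobj] at hle
  have hZle : Z ≤ 0 := by
    by_contra h
    push_neg at h
    have := mul_pos (hb i j) h
    linarith
  linarith
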